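/- Let Ω ⊆ ℝ² be a bounded measurable set, let L := sup over unit vectors θ ∈ ℝ² and s ∈ ℝ of μH[1]({x ∈ ℝ² : ⟪x, θ⟫ = s} ∩ Ω) be finite, let σ be a nonnegative measure on S¹ × ℝ (where S¹ is the unit circle in ℝ²), let η be a finite nonnegative measure on S¹, and let ρ : ℝ² → [0, ∞) be a bounded measurable function, such that the disintegration identity ∫_{S¹×ℝ} ( ∫_{{x : ⟪x,θ⟫ = s} ∩ Ω} ψ(x, s, θ) dμH[1](x) ) dσ(θ, s) = ∫_{S¹} ( ∫_Ω ψ(x, ⟪x, θ⟫, θ) ρ(x) dx ) dη(θ) holds for every nonnegative measurable ψ : ℝ² × ℝ × S¹ → [0, ∞]. Let p ∈ [1, ∞) and let v : ℝ² → ℝ be measurable with ∫_Ω |v(x)|^p dx < ∞. Then for σ-almost every (θ, s) ∈ S¹ × ℝ, the line integral ∫_{{x : ⟪x,θ⟫ = s} ∩ Ω} |v(x)| dμH[1](x) is finite, so that the undersampled Radon transform (R v)(θ, s) := ∫_{{x : ⟪x,θ⟫ = s} ∩ Ω} v(x) dμH[1](x) is well defined σ-almost everywhere. -/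

import Mathlib

open MeasureTheory
open scoped RealInnerProductSpace ENNReal NNReal

/-- The plane. -/
noncomputable abbrev Plane := EuclideanSpace ℝ (Fin 2)

/-- The unit circle `S¹` in the plane. -/
noncomputable abbrev UnitCircle : Set Plane := Metric.sphere (0 : Plane) 1


noncomputable def perp (θ : Plane) : Plane := WithLp.toLp 2 ![-(θ 1), θ 0]

lemma perp_zero (θ : Plane) : perp θ 0 = -(θ 1) := rfl
lemma perp_one (θ : Plane) : perp θ 1 = θ 0 := rfl

lemma inner_plane (x y : Plane) : ⟪x, y⟫ = x 0 * y 0 + x 1 * y 1 := by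
  simp [PiLp.inner_apply, Fin.sum_univ_two]; ring

lemma sq_sum_of_norm_one {θ : Plane} (hθ : ‖θ‖ = 1) : θ 0 ^ 2 + θ 1 ^ 2 = 1 := by
  have := EuclideanSpace.norm_eq θ
  rw [hθ] at this
  have h1 : Real.sqrt (∑ i : Fin 2, ‖θ i‖ ^ 2) = 1 := this.symm
  have h2 : (∑ i : Fin 2, ‖θ i‖ ^ 2) = 1 := (Real.sqrt_eq_one.mp h1)
  simpa [Fin.sum_univ_two, Real.norm_eq_abs, sq_abs] using h2

lemma norm_perp {θ : Plane} (hθ : ‖θ‖ = 1) : ‖perp θ‖ = 1 := by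
  rw [EuclideanSpace.norm_eq]
  have := sq_sum_of_norm_one hθ
  rw [show (∑ i : Fin 2, ‖perp θ i‖ ^ 2) = θ 0 ^ 2 + θ 1 ^ 2 by
    simp [Fin.sum_univ_two, perp_zero, perp_one, Real.norm_eq_abs, sq_abs]; ring]
  rw [this, Real.sqrt_one]

noncomputable def lineMap' (θ : Plane) (s : ℝ) (t : ℝ) : Plane := s • θ + t • perp θ

lemma lineMap'_continuous (θ : Plane) (s : ℝ) : Continuous (lineMap' θ s) := by
  unfold lineMap'; fun_prop

lemma lineMap'_isometry {θ : Plane} (hθ : ‖θ‖ = 1) (s : ℝ) : Isometry (lineMap' θ s) := by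
  apply Isometry.of_dist_eq
  intro t t'
  have : lineMap' θ s t - lineMap' θ s t' = (t - t') • perp θ := by
    unfold lineMap'; module
  rw [dist_eq_norm, this, norm_smul, norm_perp hθ, Real.dist_eq, Real.norm_eq_abs, mul_one]

lemma lineMap'_inner {θ : Plane} (hθ : ‖θ‖ = 1) (s t : ℝ) : ⟪lineMap' θ s t, θ⟫ = s := by
  have h := sq_sum_of_norm_one hθ
  simp only [lineMap', inner_plane, PiLp.add_apply, PiLp.smul_apply, smul_eq_mul,
    perp_zero, perp_one]
  linear_combination s * h

lemma lineMap'_surj {θ : Plane} (hθ : ‖θ‖ = 1) (s : ℝ) {x : Plane} (hx : ⟪x, θ⟫ = s) :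
    lineMap' θ s (⟪x, perp θ⟫) = x := by
  have h := sq_sum_of_norm_one hθ
  rw [inner_plane] at hx
  ext i
  fin_cases i
  · show s * θ 0 + ⟪x, perp θ⟫ * perp θ 0 = x 0
    rw [inner_plane, perp_zero, perp_one]
    linear_combination (-(θ 0)) * hx + x 0 * h
  · show s * θ 1 + ⟪x, perp θ⟫ * perp θ 1 = x 1
    rw [inner_plane, perp_zero, perp_one]
    linear_combination (-(θ 1)) * hx + x 1 * h

lemma map_volume_eq {θ : Plane} (hθ : ‖θ‖ = 1) (s : ℝ) :
    Measure.map (lineMap' θ s) volume = μH[1].restrict {x : Plane | ⟪x, θ⟫ = s} := by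
  ext A hA
  rw [Measure.map_apply ((lineMap'_continuous θ s).measurable) hA,
    Measure.restrict_apply hA]
  have himg : lineMap' θ s '' (lineMap' θ s ⁻¹' A) = A ∩ {x : Plane | ⟪x, θ⟫ = s} := by
    ext x
    constructor
    · rintro ⟨t, ht, rfl⟩
      exact ⟨ht, lineMap'_inner hθ s t⟩
    · rintro ⟨hxA, hxl⟩
      exact ⟨⟪x, perp θ⟫, by rwa [Set.mem_preimage, lineMap'_surj hθ s hxl],
        lineMap'_surj hθ s hxl⟩
  calc volume (lineMap' θ s ⁻¹' A) = μH[1] (lineMap' θ s ⁻¹' A) := by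
        rw [MeasureTheory.hausdorffMeasure_real]
    _ = μH[1] (lineMap' θ s '' (lineMap' θ s ⁻¹' A)) :=
        ((lineMap'_isometry hθ s).hausdorffMeasure_image (Or.inl zero_le_one) _).symm
    _ = μH[1] (A ∩ {x : Plane | ⟪x, θ⟫ = s}) := by rw [himg]

lemma slice_lintegral {θ : Plane} (hθ : ‖θ‖ = 1) (s : ℝ) {Ω : Set Plane}
    (hΩm : MeasurableSet Ω) {f : Plane → ℝ≥0∞} (hf : Measurable f) :
    ∫⁻ x in {x : Plane | ⟪x, θ⟫ = s} ∩ Ω, f x ∂μH[1]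
      = ∫⁻ t : ℝ, Ω.indicator f (lineMap' θ s t) ∂volume := by
  rw [Set.inter_comm, ← Measure.restrict_restrict hΩm, ← map_volume_eq hθ s,
    ← lintegral_indicator hΩm,
    lintegral_map (hf.indicator hΩm) (lineMap'_continuous θ s).measurable]

lemma continuous_perp : Continuous perp := by
  unfold perp
  refine (PiLp.continuous_toLp 2 _).comp ?_
  apply continuous_pi
  intro i
  fin_cases i
  · exact (PiLp.continuous_apply 2 _ (1 : Fin 2)).neg
  · simpa using PiLp.continuous_apply 2 _ (0 : Fin 2)

lemma F_measurable {Ω : Set Plane} (hΩm : MeasurableSet Ω) {f : Plane → ℝ≥0∞}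
    (hf : Measurable f) :
    Measurable (fun θs : ↥UnitCircle × ℝ =>
      ∫⁻ t : ℝ, Ω.indicator f (lineMap' (θs.1 : Plane) θs.2 t) ∂volume) := by
  have hcont : Continuous (fun q : (↥UnitCircle × ℝ) × ℝ =>
      lineMap' (q.1.1 : Plane) q.1.2 q.2) := by
    unfold lineMap'
    exact (continuous_fst.snd.smul continuous_fst.fst.subtype_val).add
      (continuous_snd.smul (continuous_perp.comp continuous_fst.fst.subtype_val))
  exact Measurable.lintegral_prod_right ((hf.indicator hΩm).comp hcont.measurable)

/-- Well-definedness of the undersampled Radon transform: under the disintegration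
identity linking `σ`, `η` and the bounded density `ρ`, for every `v ∈ L^p(Ω)` the line
integral of `|v|` is finite for `σ`-almost every measured line `(θ, s)`. -/
theorem undersampled_radon_wellDefined
    (Ω : Set Plane) (hΩb : Bornology.IsBounded Ω) (hΩm : MeasurableSet Ω)
    (L : ℝ)
    (hL : ∀ θ : Plane, ‖θ‖ = 1 → ∀ s : ℝ,
      μH[1] ({x : Plane | ⟪x, θ⟫ = s} ∩ Ω) ≤ ENNReal.ofReal L)
    (σ : Measure (↥UnitCircle × ℝ))
    (η : Measure ↥UnitCircle) (hη : IsFiniteMeasure η)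
    (ρ : Plane → ℝ≥0) (hρm : Measurable ρ)
    (Cρ : ℝ≥0) (hρb : ∀ x, ρ x ≤ Cρ)
    (hdis : ∀ ψ : Plane × ℝ × ↥UnitCircle → ℝ≥0∞, Measurable ψ →
      ∫⁻ θs : ↥UnitCircle × ℝ,
        (∫⁻ x in {x : Plane | ⟪x, (θs.1 : Plane)⟫ = θs.2} ∩ Ω,
          ψ (x, θs.2, θs.1) ∂μH[1]) ∂σ
      = ∫⁻ θ : ↥UnitCircle,
          (∫⁻ x in Ω, ψ (x, ⟪x, (θ : Plane)⟫, θ) * (ρ x : ℝ≥0∞)) ∂η)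
    (p : ℝ) (hp : 1 ≤ p)
    (v : Plane → ℝ) (hv : Measurable v)
    (hvp : ∫⁻ x in Ω, ENNReal.ofReal (|v x| ^ p) < ⊤) :
    ∀ᵐ θs : ↥UnitCircle × ℝ ∂σ,
      (∫⁻ x in {x : Plane | ⟪x, (θs.1 : Plane)⟫ = θs.2} ∩ Ω,
        ENNReal.ofReal |v x| ∂μH[1]) < ⊤ := by
  set f : Plane → ℝ≥0∞ := fun x => ENNReal.ofReal |v x| with hf_def
  have hfm : Measurable f := ENNReal.measurable_ofReal.comp hv.abs
  -- the disintegration identity applied to ψ(x,s,θ) = |v x|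
  have hψm : Measurable (fun q : Plane × ℝ × ↥UnitCircle => f q.1) :=
    hfm.comp measurable_fst
  have key := hdis (fun q => f q.1) hψm
  -- the RHS is finite
  have hΩvol : volume Ω < ⊤ := hΩb.measure_lt_top
  have hpt : ∀ x, f x ≤ 1 + ENNReal.ofReal (|v x| ^ p) := by
    intro x
    by_cases h1 : |v x| ≤ 1
    · calc f x ≤ 1 := ENNReal.ofReal_le_one.2 h1
        _ ≤ 1 + ENNReal.ofReal (|v x| ^ p) := le_self_add
    · have h1' : (1 : ℝ) ≤ |v x| := le_of_not_ge h1
      have : |v x| ≤ |v x| ^ p := by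
        calc |v x| = |v x| ^ (1 : ℝ) := (Real.rpow_one _).symm
          _ ≤ |v x| ^ p := Real.rpow_le_rpow_of_exponent_le h1' hp
      exact le_trans (ENNReal.ofReal_le_ofReal this) le_add_self
  have hintf : ∫⁻ x in Ω, f x < ⊤ := by
    calc ∫⁻ x in Ω, f x ≤ ∫⁻ x in Ω, (1 + ENNReal.ofReal (|v x| ^ p)) :=
          lintegral_mono fun x => hpt x
      _ = volume Ω + ∫⁻ x in Ω, ENNReal.ofReal (|v x| ^ p) := by
          rw [lintegral_add_left measurable_const]
          simp
      _ < ⊤ := ENNReal.add_lt_top.2 ⟨hΩvol, hvp⟩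
  have hC : ∫⁻ x in Ω, f x * (ρ x : ℝ≥0∞) < ⊤ := by
    calc ∫⁻ x in Ω, f x * (ρ x : ℝ≥0∞) ≤ ∫⁻ x in Ω, f x * (Cρ : ℝ≥0∞) :=
          lintegral_mono fun x =>
            mul_le_mul_right (ENNReal.coe_le_coe.2 (hρb x)) _
      _ = (Cρ : ℝ≥0∞) * ∫⁻ x in Ω, f x := by rw [lintegral_mul_const _ hfm, mul_comm]
      _ < ⊤ := ENNReal.mul_lt_top ENNReal.coe_lt_top hintf
  have hRHS : (∫⁻ θ : ↥UnitCircle, (∫⁻ x in Ω, f x * (ρ x : ℝ≥0∞)) ∂η) < ⊤ := by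
    rw [lintegral_const]
    exact ENNReal.mul_lt_top hC (measure_lt_top η _)
  have hLHS : ∫⁻ θs : ↥UnitCircle × ℝ,
      (∫⁻ x in {x : Plane | ⟪x, (θs.1 : Plane)⟫ = θs.2} ∩ Ω, f x ∂μH[1]) ∂σ < ⊤ := by
    rw [key]; exact hRHS
  -- rewrite the slice integral in terms of a measurable function
  have hFeq : ∀ θs : ↥UnitCircle × ℝ,
      (∫⁻ x in {x : Plane | ⟪x, (θs.1 : Plane)⟫ = θs.2} ∩ Ω, f x ∂μH[1])
        = ∫⁻ t : ℝ, Ω.indicator f (lineMap' (θs.1 : Plane) θs.2 t) ∂volume := by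
    intro θs
    have hθ : ‖(θs.1 : Plane)‖ = 1 := by
      have := θs.1.2
      rwa [Metric.mem_sphere, dist_zero_right] at this
    exact slice_lintegral hθ θs.2 hΩm hfm
  have hFm := F_measurable hΩm hfm
  have := ae_lt_top hFm (by
    rw [show (fun θs : ↥UnitCircle × ℝ =>
        ∫⁻ t : ℝ, Ω.indicator f (lineMap' (θs.1 : Plane) θs.2 t) ∂volume)
      = fun θs : ↥UnitCircle × ℝ =>
        (∫⁻ x in {x : Plane | ⟪x, (θs.1 : Plane)⟫ = θs.2} ∩ Ω, f x ∂μH[1])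
      from funext fun θs => (hFeq θs).symm]
    exact hLHS.ne) (μ := σ)
  filter_upwards [this] with θs hθs
  rw [hFeq θs]
  exact hθs
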